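/- The derivative with respect to z, evaluated at z = z₀, of the characteristic speed s_ch(z) = (s₃z³ - s₂z² - s₁z + s₀)/(b₁(z₀²+1)((b₁-1)z²+1)) (with s₃ = b₁c(t₀z₀(1+z₀²)+1)(1+b₁), s₂ = c(t₀z₀⁴+2z₀-t₀)(1+b₁), s₁ = b₁c(t₀z₀³-2z₀²+t₀z₀-1), s₀ = c(t₀z₀⁴+2z₀-t₀)) equals c(((b₁+1)z₀⁵+(b₁+4)z₀³+3z₀)t₀ + (b₁-1)z₀² + 1)/((z₀²+1)((b₁-1)z₀²+1)). In particular, since the denominator is positive, the sign of s_ch'(z₀) equals the sign of the inflection-locus expression ((b₁+1)z₀⁵+(b₁+4)z₀³+3z₀)t₀ + (b₁-1)z₀² + 1. -/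

import Mathlib

/-- The derivative of the characteristic speed at `z = z₀` equals (up to the
positive denominator) the inflection-locus expression; in particular its sign
equals the sign of that expression. -/
theorem stmt11 (b1 c t0 z0 : ℝ) (hb : 1 < b1) (hc : 0 < c) :
    let s3 := b1 * c * (t0 * z0 * (1 + z0 ^ 2) + 1) * (1 + b1)
    let s2 := c * (t0 * z0 ^ 4 + 2 * z0 - t0) * (1 + b1)
    let s1 := b1 * c * (t0 * z0 ^ 3 - 2 * z0 ^ 2 + t0 * z0 - 1)
    let s0 := c * (t0 * z0 ^ 4 + 2 * z0 - t0)
    let sch : ℝ → ℝ := fun z =>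
      (s3 * z ^ 3 - s2 * z ^ 2 - s1 * z + s0) / (b1 * (z0 ^ 2 + 1) * ((b1 - 1) * z ^ 2 + 1))
    deriv sch z0 =
      c * (((b1 + 1) * z0 ^ 5 + (b1 + 4) * z0 ^ 3 + 3 * z0) * t0 + (b1 - 1) * z0 ^ 2 + 1) /
        ((z0 ^ 2 + 1) * ((b1 - 1) * z0 ^ 2 + 1)) ∧
    ((0 < deriv sch z0 ↔
        0 < ((b1 + 1) * z0 ^ 5 + (b1 + 4) * z0 ^ 3 + 3 * z0) * t0 + (b1 - 1) * z0 ^ 2 + 1) ∧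
     (deriv sch z0 < 0 ↔
        ((b1 + 1) * z0 ^ 5 + (b1 + 4) * z0 ^ 3 + 3 * z0) * t0 + (b1 - 1) * z0 ^ 2 + 1 < 0)) := by
  intro s3 s2 s1 s0 sch
  have hb0 : (0:ℝ) < b1 := lt_trans one_pos hb
  have h1 : (0:ℝ) < z0 ^ 2 + 1 := by positivity
  have hbm : (0:ℝ) < b1 - 1 := by linarith
  have h2 : (0:ℝ) < (b1 - 1) * z0 ^ 2 + 1 := by positivity
  have hden : (0:ℝ) < b1 * (z0 ^ 2 + 1) * ((b1 - 1) * z0 ^ 2 + 1) := by positivity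
  have hnum : HasDerivAt (fun z : ℝ => s3 * z ^ 3 - s2 * z ^ 2 - s1 * z + s0)
      (3 * s3 * z0 ^ 2 - 2 * s2 * z0 - s1) z0 := by
    have := (((hasDerivAt_pow 3 z0).const_mul s3).sub
        ((hasDerivAt_pow 2 z0).const_mul s2)).sub ((hasDerivAt_id z0).const_mul s1)
    have := this.add_const s0
    refine this.congr_deriv ?_
    ring
  have hdenD : HasDerivAt (fun z : ℝ => b1 * (z0 ^ 2 + 1) * ((b1 - 1) * z ^ 2 + 1))
      (b1 * (z0 ^ 2 + 1) * (2 * (b1 - 1) * z0)) z0 := by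
    have := (((hasDerivAt_pow 2 z0).const_mul (b1 - 1)).add_const 1).const_mul
      (b1 * (z0 ^ 2 + 1))
    refine this.congr_deriv ?_
    ring
  have hD : HasDerivAt sch
      (((3 * s3 * z0 ^ 2 - 2 * s2 * z0 - s1) * (b1 * (z0 ^ 2 + 1) * ((b1 - 1) * z0 ^ 2 + 1)) -
        (s3 * z0 ^ 3 - s2 * z0 ^ 2 - s1 * z0 + s0) * (b1 * (z0 ^ 2 + 1) * (2 * (b1 - 1) * z0))) /
        (b1 * (z0 ^ 2 + 1) * ((b1 - 1) * z0 ^ 2 + 1)) ^ 2) z0 :=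
    hnum.div hdenD (ne_of_gt hden)
  have hEq : deriv sch z0 =
      c * (((b1 + 1) * z0 ^ 5 + (b1 + 4) * z0 ^ 3 + 3 * z0) * t0 + (b1 - 1) * z0 ^ 2 + 1) /
        ((z0 ^ 2 + 1) * ((b1 - 1) * z0 ^ 2 + 1)) := by
    rw [hD.deriv]
    simp only [s3, s2, s1, s0]
    field_simp
    ring
  refine ⟨hEq, ?_, ?_⟩ <;> rw [hEq]
  · rw [div_pos_iff]
    constructor
    · rintro (⟨h, _⟩ | ⟨_, h⟩)
      · nlinarith [mul_pos h1 h2]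
      · nlinarith [mul_pos h1 h2]
    · intro h
      exact Or.inl ⟨by positivity, mul_pos h1 h2⟩
  · rw [div_neg_iff]
    constructor
    · rintro (⟨_, h⟩ | ⟨h, _⟩)
      · nlinarith [mul_pos h1 h2]
      · nlinarith [mul_pos h1 h2]
    · intro h
      exact Or.inr ⟨by nlinarith [mul_pos h1 h2], mul_pos h1 h2⟩
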